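/- Let ω ∈ ℝ and g < 0. Then the polynomial z⁴ + (ω² − 1) z² + (g − ω²) has exactly two real roots, namely ±ρ for some real ρ > 1, and exactly two purely imaginary roots, namely ±is for some real s > 0, and these four numbers are all of its complex roots. -/
import Mathlib


/-- Region 1 of the parameter space (g < 0) of the non-local harmonic oscillator:
the quartic z⁴ + (ω²−1)z² + (g−ω²) has exactly two real roots ±ρ with ρ > 1, two purely
imaginary roots ±is with s > 0, and no other complex roots. -/
theorem stmt8 (ω g : ℝ) (hg : g < 0) :
    ∃ ρ s : ℝ, 1 < ρ ∧ 0 < s ∧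
      ∀ z : ℂ, z ^ 4 + ((ω : ℂ) ^ 2 - 1) * z ^ 2 + ((g : ℂ) - (ω : ℂ) ^ 2) = 0 ↔
        (z = (ρ : ℂ) ∨ z = -(ρ : ℂ) ∨ z = Complex.I * s ∨ z = -(Complex.I * s)) := by
  set D : ℝ := (ω ^ 2 + 1) ^ 2 - 4 * g with hD_def
  have hD : 0 < D := by nlinarith [sq_nonneg (ω ^ 2 + 1)]
  set r : ℝ := Real.sqrt D with hr_def
  have hr2 : r ^ 2 = D := Real.sq_sqrt hD.le
  set ra : ℝ := (1 - ω ^ 2 + r) / 2 with hra_def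
  set rb : ℝ := (ω ^ 2 - 1 + r) / 2 with hrb_def
  have hra1 : 1 < ra := by
    have h1 : ω ^ 2 + 1 < r := by
      rw [hr_def]
      refine (Real.lt_sqrt (by positivity)).2 ?_
      nlinarith
    rw [hra_def]; nlinarith
  have hrb0 : 0 < rb := by
    have h1 : |1 - ω ^ 2| < r := by
      rw [hr_def]
      refine (Real.lt_sqrt (abs_nonneg _)).2 ?_
      rw [sq_abs]; nlinarith
    have := (abs_lt.1 h1).2
    rw [hrb_def]; nlinarith
  have hab : ra * rb = ω ^ 2 - g := by
    rw [hra_def, hrb_def]; nlinarith [hr2]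
  refine ⟨Real.sqrt ra, Real.sqrt rb, ?_, ?_, ?_⟩
  · have := Real.sqrt_lt_sqrt (by norm_num) hra1
    simpa using this
  · exact Real.sqrt_pos.2 hrb0
  · intro z
    have hρ : ((Real.sqrt ra : ℝ) : ℂ) ^ 2 = (ra : ℂ) := by
      rw [← Complex.ofReal_pow, Real.sq_sqrt (by linarith : (0:ℝ) ≤ ra)]
    have hs : ((Real.sqrt rb : ℝ) : ℂ) ^ 2 = (rb : ℂ) := by
      rw [← Complex.ofReal_pow, Real.sq_sqrt hrb0.le]
    have hbaC : (rb : ℂ) - (ra : ℂ) = (ω : ℂ) ^ 2 - 1 := by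
      have h : rb - ra = ω ^ 2 - 1 := by rw [hra_def, hrb_def]; ring
      exact_mod_cast h
    have habC : (ra : ℂ) * (rb : ℂ) = (ω : ℂ) ^ 2 - (g : ℂ) := by
      exact_mod_cast hab
    have hfac : z ^ 4 + ((ω : ℂ) ^ 2 - 1) * z ^ 2 + ((g : ℂ) - (ω : ℂ) ^ 2)
        = (z - (Real.sqrt ra : ℂ)) * (z + (Real.sqrt ra : ℂ)) *
          (z - Complex.I * (Real.sqrt rb : ℂ)) * (z + Complex.I * (Real.sqrt rb : ℂ)) := by
      linear_combination ((z ^ 2 - ((Real.sqrt ra : ℂ)) ^ 2) * ((Real.sqrt rb : ℂ) ^ 2)) *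
          Complex.I_sq + (z ^ 2 + ((Real.sqrt rb : ℂ)) ^ 2) * hρ +
          ((ra : ℂ) - z ^ 2) * hs - z ^ 2 * hbaC + habC
    rw [hfac, mul_eq_zero, mul_eq_zero, mul_eq_zero, sub_eq_zero, sub_eq_zero,
      add_eq_zero_iff_eq_neg, add_eq_zero_iff_eq_neg]
    tauto
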